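/- If the frequency response G(Ω) of an even finitely supported sequence g satisfies G(Ω) > 0 for all Ω, then every Toeplitz matrix G_N with entries g(i-j) is positive definite (for every size N). -/

import Mathlib

open Real intervalIntegral in
private lemma intCosAux (n : ℤ) : ∫ x in (0:ℝ)..(2*π), Real.cos (n * x)
    = if n = 0 then 2*π else 0 := by
  rcases eq_or_ne n 0 with h | h
  · simp [h]
  · have hc : (n : ℝ) ≠ 0 := Int.cast_ne_zero.mpr h
    rw [if_neg h, integral_comp_mul_left Real.cos hc, integral_cos]
    have h1 : (n : ℝ) * (2*π) = ((2*n : ℤ) : ℝ) * π := by push_cast; ring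
    have h2 : (n : ℝ) * 0 = ((0:ℤ):ℝ) * π := by push_cast; ring
    rw [h1, h2, Real.sin_int_mul_pi, Real.sin_int_mul_pi]
    simp

open Real intervalIntegral in
private lemma cosCosAux (k m : ℤ) : ∫ x in (0:ℝ)..(2*π), Real.cos (k*x) * Real.cos (m*x)
    = (if k = m then π else 0) + (if k = -m then π else 0) := by
  have key : ∀ x : ℝ, Real.cos (k*x) * Real.cos (m*x)
      = Real.cos (((k-m:ℤ):ℝ) * x) / 2 + Real.cos (((k+m:ℤ):ℝ) * x) / 2 := by
    intro x
    push_cast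
    rw [sub_mul, add_mul, Real.cos_sub, Real.cos_add]
    ring
  have hi1 : IntervalIntegrable (fun x => Real.cos (((k-m:ℤ):ℝ) * x) / 2) MeasureTheory.volume 0 (2*π) := by
    apply Continuous.intervalIntegrable; fun_prop
  have hi2 : IntervalIntegrable (fun x => Real.cos (((k+m:ℤ):ℝ) * x) / 2) MeasureTheory.volume 0 (2*π) := by
    apply Continuous.intervalIntegrable; fun_prop
  rw [intervalIntegral.integral_congr (g := fun x => Real.cos (((k-m:ℤ):ℝ) * x) / 2 + Real.cos (((k+m:ℤ):ℝ) * x) / 2) (fun x _ => key x),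
    intervalIntegral.integral_add hi1 hi2, intervalIntegral.integral_div, intervalIntegral.integral_div,
    intCosAux, intCosAux]
  simp only [sub_eq_zero, add_eq_zero_iff_eq_neg]
  split_ifs <;> ring

open Real in
theorem stmt11 (g : ℤ → ℝ) (heven : ∀ k : ℤ, g (-k) = g k)
    (hfin : (Function.support g).Finite)
    (hpos : ∀ Ω : ℝ, 0 < ∑' k : ℤ, g k * Real.cos (k * Ω)) :
    ∀ N : ℕ, (Matrix.of fun i j : Fin N => g ((i : ℤ) - (j : ℤ))).PosDef := by
  intro N
  classical
  set s : Finset ℤ := hfin.toFinset with hs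
  have hg0 : ∀ m : ℤ, m ∉ s → g m = 0 := by
    intro m hm
    by_contra h
    exact hm (hfin.mem_toFinset.mpr h)
  set G : ℝ → ℝ := fun Ω => ∑ k ∈ s, g k * Real.cos (k * Ω) with hG
  have hGpos : ∀ Ω, 0 < G Ω := by
    intro Ω
    have h := hpos Ω
    rwa [tsum_eq_sum (s := s) (f := fun k => g k * Real.cos (k * Ω))
      (fun b hb => by simp [hg0 b hb])] at h
  have hGcont : Continuous G := by
    apply continuous_finset_sum
    intro k _
    fun_prop
  rw [Matrix.posDef_iff_dotProduct_mulVec]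
  constructor
  · ext i j
    simp only [Matrix.conjTranspose_apply, Matrix.of_apply, star_trivial]
    rw [← heven ((j:ℤ) - (i:ℤ)), neg_sub]
  · intro x hx
    set T : ℝ → ℝ := fun Ω => ∑ i : Fin N, ∑ j : Fin N,
      x i * x j * Real.cos ((((i:ℤ) - (j:ℤ) : ℤ) : ℝ) * Ω) with hT
    have hTcont : Continuous T := by
      apply continuous_finset_sum
      intro i _
      apply continuous_finset_sum
      intro j _
      fun_prop
    have hTnn : ∀ Ω, 0 ≤ T Ω := by
      intro Ω
      have hTsq : T Ω = (∑ i : Fin N, x i * Real.cos ((i:ℤ) * Ω))^2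
          + (∑ i : Fin N, x i * Real.sin ((i:ℤ) * Ω))^2 := by
        rw [hT, sq, sq, Finset.sum_mul_sum, Finset.sum_mul_sum, ← Finset.sum_add_distrib]
        refine Finset.sum_congr rfl fun i _ => ?_
        rw [← Finset.sum_add_distrib]
        refine Finset.sum_congr rfl fun j _ => ?_
        push_cast
        rw [sub_mul, Real.cos_sub]
        ring
      rw [hTsq]; positivity
    -- key sum lemma
    have hkey : ∀ m : ℤ, ∑ k ∈ s, g k * ((if k = m then π else 0) + (if k = -m then π else 0))
        = 2 * π * g m := by
      intro m
      have h1 : ∑ k ∈ s, g k * (if k = m then π else 0) = g m * π := by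
        simp only [mul_ite, mul_zero]
        rw [Finset.sum_ite_eq' s m (fun k => g k * π)]
        split_ifs with h
        · rfl
        · rw [hg0 m h]; ring
      have h2 : ∑ k ∈ s, g k * (if k = -m then π else 0) = g m * π := by
        simp only [mul_ite, mul_zero]
        rw [Finset.sum_ite_eq' s (-m) (fun k => g k * π)]
        split_ifs with h
        · rw [heven]
        · rw [show g m = 0 from by rw [← heven m]; exact hg0 (-m) h]; ring
      calc ∑ k ∈ s, g k * ((if k = m then π else 0) + (if k = -m then π else 0))
          = ∑ k ∈ s, (g k * (if k = m then π else 0) + g k * (if k = -m then π else 0)) := by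
            refine Finset.sum_congr rfl fun k _ => by ring
        _ = g m * π + g m * π := by rw [Finset.sum_add_distrib, h1, h2]
        _ = 2 * π * g m := by ring
    -- integral of G * T
    have hGT : ∫ Ω in (0:ℝ)..(2*π), G Ω * T Ω
        = 2 * π * ∑ i : Fin N, ∑ j : Fin N, x i * x j * g ((i:ℤ) - (j:ℤ)) := by
      have expand : ∀ Ω : ℝ, G Ω * T Ω = ∑ k ∈ s, ∑ i : Fin N, ∑ j : Fin N,
          g k * (x i * x j) * (Real.cos ((k:ℝ)*Ω) * Real.cos ((((i:ℤ) - (j:ℤ) : ℤ):ℝ)*Ω)) := by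
        intro Ω
        rw [hG, hT]
        simp only
        rw [Finset.sum_mul_sum]
        refine Finset.sum_congr rfl fun k _ => ?_
        refine Finset.sum_congr rfl fun i _ => ?_
        rw [Finset.mul_sum]
        refine Finset.sum_congr rfl fun j _ => ?_
        push_cast
        ring
      rw [intervalIntegral.integral_congr (g := fun Ω => ∑ k ∈ s, ∑ i : Fin N, ∑ j : Fin N,
          g k * (x i * x j) * (Real.cos ((k:ℝ)*Ω) * Real.cos ((((i:ℤ) - (j:ℤ) : ℤ):ℝ)*Ω)))
          (fun Ω _ => expand Ω)]
      rw [intervalIntegral.integral_finset_sum (fun k _ => by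
        apply Continuous.intervalIntegrable
        apply continuous_finset_sum; intro i _
        apply continuous_finset_sum; intro j _
        fun_prop)]
      have step : ∀ k ∈ s, (∫ Ω in (0:ℝ)..(2*π), ∑ i : Fin N, ∑ j : Fin N,
          g k * (x i * x j) * (Real.cos ((k:ℝ)*Ω) * Real.cos ((((i:ℤ) - (j:ℤ) : ℤ):ℝ)*Ω)))
          = ∑ i : Fin N, ∑ j : Fin N, g k * (x i * x j) *
            ((if k = (i:ℤ) - (j:ℤ) then π else 0) + (if k = -((i:ℤ) - (j:ℤ)) then π else 0)) := by
        intro k _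
        rw [intervalIntegral.integral_finset_sum (fun i _ => by
          apply Continuous.intervalIntegrable
          apply continuous_finset_sum; intro j _
          fun_prop)]
        refine Finset.sum_congr rfl fun i _ => ?_
        rw [intervalIntegral.integral_finset_sum (fun j _ => by
          apply Continuous.intervalIntegrable; fun_prop)]
        refine Finset.sum_congr rfl fun j _ => ?_
        rw [intervalIntegral.integral_const_mul, cosCosAux]
      rw [Finset.sum_congr rfl step]
      rw [Finset.sum_comm]
      calc ∑ i : Fin N, ∑ k ∈ s, ∑ j : Fin N, g k * (x i * x j) *
            ((if k = (i:ℤ) - (j:ℤ) then π else 0) + (if k = -((i:ℤ) - (j:ℤ)) then π else 0))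
          = ∑ i : Fin N, ∑ j : Fin N, ∑ k ∈ s, g k * (x i * x j) *
            ((if k = (i:ℤ) - (j:ℤ) then π else 0) + (if k = -((i:ℤ) - (j:ℤ)) then π else 0)) := by
            exact Finset.sum_congr rfl fun i _ => Finset.sum_comm
        _ = ∑ i : Fin N, ∑ j : Fin N, (x i * x j) * (2 * π * g ((i:ℤ) - (j:ℤ))) := by
            refine Finset.sum_congr rfl fun i _ => Finset.sum_congr rfl fun j _ => ?_
            rw [show (∑ k ∈ s, g k * (x i * x j) *
              ((if k = (i:ℤ) - (j:ℤ) then π else 0) + (if k = -((i:ℤ) - (j:ℤ)) then π else 0)))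
              = (x i * x j) * ∑ k ∈ s, g k *
              ((if k = (i:ℤ) - (j:ℤ) then π else 0) + (if k = -((i:ℤ) - (j:ℤ)) then π else 0)) from by
                rw [Finset.mul_sum]
                exact Finset.sum_congr rfl fun k _ => by ring]
            rw [hkey]
        _ = 2 * π * ∑ i : Fin N, ∑ j : Fin N, x i * x j * g ((i:ℤ) - (j:ℤ)) := by
            rw [Finset.mul_sum]
            refine Finset.sum_congr rfl fun i _ => ?_
            rw [Finset.mul_sum]
            exact Finset.sum_congr rfl fun j _ => by ring
    -- integral of T
    have hTI : ∫ Ω in (0:ℝ)..(2*π), T Ω = 2 * π * ∑ i : Fin N, (x i)^2 := by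
      rw [hT]
      rw [intervalIntegral.integral_finset_sum (fun i _ => by
        apply Continuous.intervalIntegrable
        apply continuous_finset_sum; intro j _
        fun_prop)]
      have step : ∀ i : Fin N, (∫ Ω in (0:ℝ)..(2*π), ∑ j : Fin N,
          x i * x j * Real.cos ((((i:ℤ) - (j:ℤ) : ℤ):ℝ) * Ω))
          = ∑ j : Fin N, x i * x j * (if i = j then 2*π else 0) := by
        intro i
        rw [intervalIntegral.integral_finset_sum (fun j _ => by
          apply Continuous.intervalIntegrable; fun_prop)]
        refine Finset.sum_congr rfl fun j _ => ?_
        rw [intervalIntegral.integral_const_mul, intCosAux]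
        congr 1
        simp [sub_eq_zero, Fin.val_inj]
      rw [Finset.sum_congr rfl (fun i _ => step i)]
      rw [Finset.mul_sum]
      refine Finset.sum_congr rfl fun i _ => ?_
      simp only [mul_ite, mul_zero]
      rw [Finset.sum_ite_eq Finset.univ i (fun j => x i * x j * (2*π))]
      simp only [Finset.mem_univ, if_true]
      ring
    -- minimum of G
    obtain ⟨Ω₀, _, hΩ₀min⟩ := isCompact_Icc.exists_isMinOn
      (Set.nonempty_Icc.mpr (by positivity : (0:ℝ) ≤ 2*π)) hGcont.continuousOn
    have hc : 0 < G Ω₀ := hGpos Ω₀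
    have hmono : ∫ Ω in (0:ℝ)..(2*π), G Ω₀ * T Ω ≤ ∫ Ω in (0:ℝ)..(2*π), G Ω * T Ω := by
      apply intervalIntegral.integral_mono_on (by positivity)
        ((continuous_const.mul hTcont).intervalIntegrable _ _)
        ((hGcont.mul hTcont).intervalIntegrable _ _)
      intro Ω hΩ
      exact mul_le_mul_of_nonneg_right (isMinOn_iff.mp hΩ₀min Ω hΩ) (hTnn Ω)
    rw [intervalIntegral.integral_const_mul, hTI, hGT] at hmono
    have hxs : 0 < ∑ i : Fin N, (x i)^2 := by
      obtain ⟨i, hi⟩ : ∃ i, x i ≠ 0 := by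
        by_contra h
        push_neg at h
        exact hx (funext h)
      exact Finset.sum_pos' (fun i _ => sq_nonneg _) ⟨i, Finset.mem_univ i, by positivity⟩
    have hdot : dotProduct (star x)
          (Matrix.mulVec (Matrix.of fun i j : Fin N => g ((i:ℤ) - (j:ℤ))) x)
        = ∑ i : Fin N, ∑ j : Fin N, x i * x j * g ((i:ℤ) - (j:ℤ)) := by
      simp only [dotProduct, Matrix.mulVec, Matrix.of_apply, Pi.star_apply, star_trivial,
        Finset.mul_sum]
      exact Finset.sum_congr rfl fun i _ => Finset.sum_congr rfl fun j _ => by ring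
    rw [hdot]
    nlinarith [Real.pi_pos, mul_pos hc (mul_pos (mul_pos two_pos Real.pi_pos) hxs)]
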